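/- For a strictly increasing a : Fin n → ℝ, the derivative of f(x) = (∑_i a_i e^{x a_i})/(∑_i e^{x a_i}) - E satisfies 0 < f′(x) < (a_n - a_1)² for all x ∈ ℝ. -/

import Mathlib

open Finset

lemma sum_sq_identity' {n : ℕ} (e b : Fin n → ℝ) :
    2 * ((∑ i, b i * (e i * b i)) * (∑ i, e i) -
        (∑ i, b i * e i) * (∑ i, e i * b i)) =
      ∑ i, ∑ j, e i * e j * (b i - b j) ^ 2 := by
  have expand : ∀ i : Fin n, ∀ j : Fin n,
      e i * e j * (b i - b j) ^ 2 =
        (b i * (e i * b i)) * e j + e i * (b j * (e j * b j)) -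
          ((b i * e i) * (e j * b j) + (b i * e i) * (e j * b j)) := by
    intro i j; ring
  symm
  calc ∑ i, ∑ j, e i * e j * (b i - b j) ^ 2
      = ∑ i, ∑ j, ((b i * (e i * b i)) * e j + e i * (b j * (e j * b j)) -
          ((b i * e i) * (e j * b j) + (b i * e i) * (e j * b j))) := by
        exact Finset.sum_congr rfl fun i _ => Finset.sum_congr rfl fun j _ => expand i j
    _ = 2 * ((∑ i, b i * (e i * b i)) * (∑ i, e i) -
        (∑ i, b i * e i) * (∑ i, e i * b i)) := by
        simp only [Finset.sum_add_distrib, Finset.sum_sub_distrib, ← Finset.mul_sum,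
          ← Finset.sum_mul]
        ring

theorem deriv_f_bounds (n : ℕ) (hn : 2 ≤ n) (a : Fin n → ℝ)
    (ha : StrictMono a) (E : ℝ) (x : ℝ) :
    0 < deriv (fun t : ℝ => (∑ i, a i * Real.exp (t * a i)) / (∑ i, Real.exp (t * a i)) - E) x ∧
    deriv (fun t : ℝ => (∑ i, a i * Real.exp (t * a i)) / (∑ i, Real.exp (t * a i)) - E) x <
      (a ⟨n - 1, by omega⟩ - a ⟨0, by omega⟩) ^ 2 := by
  set e : Fin n → ℝ := fun i => Real.exp (x * a i) with he
  have hepos : ∀ i, 0 < e i := fun i => Real.exp_pos _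
  have hSpos : 0 < ∑ i, e i :=
    Finset.sum_pos (fun i _ => hepos i) ⟨⟨0, by omega⟩, Finset.mem_univ _⟩
  have hS0 : (∑ i, e i) ≠ 0 := ne_of_gt hSpos
  -- derivative computation
  have hS : HasDerivAt (fun t : ℝ => ∑ i, Real.exp (t * a i)) (∑ i, e i * a i) x :=
    HasDerivAt.fun_sum fun i _ => by
      simpa using ((hasDerivAt_id x).mul_const (a i)).exp
  have hN : HasDerivAt (fun t : ℝ => ∑ i, a i * Real.exp (t * a i))
      (∑ i, a i * (e i * a i)) x :=
    HasDerivAt.fun_sum fun i _ => by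
      simpa using (((hasDerivAt_id x).mul_const (a i)).exp).const_mul (a i)
  have hf : HasDerivAt
      (fun t : ℝ => (∑ i, a i * Real.exp (t * a i)) / (∑ i, Real.exp (t * a i)) - E)
      (((∑ i, a i * (e i * a i)) * (∑ i, e i) -
        (∑ i, a i * e i) * (∑ i, e i * a i)) / (∑ i, e i) ^ 2) x := by
    have := (hN.div hS hS0).sub_const E
    simpa [he] using this
  rw [hf.deriv]
  -- key identity and bounds
  set M : ℝ := a ⟨n - 1, by omega⟩ - a ⟨0, by omega⟩ with hM
  have hMpos : 0 < M := by
    have : (⟨0, by omega⟩ : Fin n) < ⟨n - 1, by omega⟩ := by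
      simp [Fin.lt_def]; omega
    simpa [hM, sub_pos] using ha this
  have key := sum_sq_identity' e a
  set Num : ℝ := (∑ i, a i * (e i * a i)) * (∑ i, e i) -
      (∑ i, a i * e i) * (∑ i, e i * a i) with hNum
  have hQpos : 0 < ∑ i, ∑ j, e i * e j * (a i - a j) ^ 2 := by
    apply Finset.sum_pos'
    · intro i _
      exact Finset.sum_nonneg fun j _ => by positivity
    · refine ⟨⟨0, by omega⟩, Finset.mem_univ _, Finset.sum_pos' (fun j _ => by positivity)
        ⟨⟨n - 1, by omega⟩, Finset.mem_univ _, ?_⟩⟩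
      have hne : a ⟨0, by omega⟩ - a ⟨n - 1, by omega⟩ ≠ 0 := by
        have := hMpos; simp [hM] at this ⊢; linarith
      have := sq_pos_of_ne_zero hne
      have h0 := hepos ⟨0, by omega⟩
      have h1 := hepos ⟨n - 1, by omega⟩
      positivity
  have hQle : (∑ i, ∑ j, e i * e j * (a i - a j) ^ 2) ≤ M ^ 2 * (∑ i, e i) ^ 2 := by
    have hsq : ∀ i j : Fin n, (a i - a j) ^ 2 ≤ M ^ 2 := by
      intro i j
      have hub : ∀ k : Fin n, a k ≤ a ⟨n - 1, by omega⟩ := fun k =>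
        ha.monotone (by simp [Fin.le_def]; omega)
      have hlb : ∀ k : Fin n, a ⟨0, by omega⟩ ≤ a k := fun k =>
        ha.monotone (by simp [Fin.le_def])
      have h1 : a i - a j ≤ M := by have := hub i; have := hlb j; simp [hM]; linarith
      have h2 : -M ≤ a i - a j := by have := hub j; have := hlb i; simp [hM]; linarith
      exact sq_le_sq' h2 h1
    calc (∑ i, ∑ j, e i * e j * (a i - a j) ^ 2)
        ≤ ∑ i, ∑ j, e i * e j * M ^ 2 := by
          refine Finset.sum_le_sum fun i _ => Finset.sum_le_sum fun j _ => ?_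
          have := hepos i; have := hepos j
          exact mul_le_mul_of_nonneg_left (hsq i j) (by positivity)
      _ = M ^ 2 * (∑ i, e i) ^ 2 := by
          simp only [← Finset.mul_sum, ← Finset.sum_mul]
          ring
  have hNumpos : 0 < Num := by nlinarith
  have hNumlt : Num < M ^ 2 * (∑ i, e i) ^ 2 := by
    have hMS : 0 < M ^ 2 * (∑ i, e i) ^ 2 := by positivity
    nlinarith
  constructor
  · exact div_pos hNumpos (by positivity)
  · rw [div_lt_iff₀ (by positivity : (0:ℝ) < (∑ i, e i) ^ 2)]
    exact hNumlt
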